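/- Let s ≥ 1 and r ≥ 1 be integers, let α_v = (-1)^{v+1} (s!)^2 / (v (s+v)! (s-v)!) for v = 1,…,s, and let H_L be a symmetric real r×r matrix with entries h_{vw} (indices 0,…,r−1) satisfying, for every j = 1,…,2s−1, j Σ_{v=0}^{r−1} Σ_{w=0}^{r−1} h_{vw} (−1)^{j−1} (r−w)^{j−1} = −(−r)^j + Σ_{v=1}^{s} α_v Σ_{w=0}^{v−1} ( w^j + (w−v)^j ). Then the row sums σ_v = Σ_{w=0}^{r−1} h_{vw} satisfy j Σ_{v=0}^{r−1} σ_v (r−v)^{j−1} = r^j − (−1)^j β_j for every j = 1,…,2s−1. -/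

import Mathlib

open Finset

private lemma fwd_pow_zero (c : ℝ) : ∀ e n : ℕ, e < n →
    (fwdDiff (1:ℕ))^[n] (fun m : ℕ ↦ ((m : ℝ) + c) ^ e) = 0 := by
  intro e
  induction e using Nat.strong_induction_on with
  | _ e IH =>
    intro n hn
    obtain ⟨n', rfl⟩ : ∃ n', n = n' + 1 := ⟨n - 1, by omega⟩
    rw [Function.iterate_succ_apply]
    have hΔ : fwdDiff (1:ℕ) (fun m : ℕ ↦ ((m : ℝ) + c) ^ e)
        = ∑ i ∈ range e, (e.choose i : ℝ) • (fun m : ℕ ↦ ((m : ℝ) + c) ^ i) := by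
      funext m
      simp only [fwdDiff, Finset.sum_apply, Pi.smul_apply, smul_eq_mul]
      push_cast
      have h1 : ((m : ℝ) + 1 + c) = ((m : ℝ) + c) + 1 := by ring
      rw [h1, add_pow, sum_range_succ]
      simp only [one_pow, mul_one, Nat.choose_self, Nat.cast_one]
      rw [add_sub_cancel_right]
      exact Finset.sum_congr rfl fun i _ => by ring
    rw [hΔ, fwdDiff_iter_finset_sum]
    funext y
    rw [Finset.sum_apply]
    refine Finset.sum_eq_zero fun i hi => ?_
    rw [fwdDiff_iter_const_smul, IH i (mem_range.mp hi) n' (by have := Finset.mem_range.mp hi; omega)]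
    simp

private lemma neg_one_pow_eq (a b : ℕ) (h : Even (a + b)) : (-1:ℝ)^a = (-1:ℝ)^b := by
  have h3 : (-1:ℝ)^a * (-1:ℝ)^b = 1 := by rw [← pow_add]; exact h.neg_one_pow
  have h4 : (-1:ℝ)^b * (-1:ℝ)^b = 1 := by rw [← pow_add]; exact Even.neg_one_pow ⟨b, rfl⟩
  exact mul_right_cancel₀ (pow_ne_zero b (by norm_num)) (h3.trans h4.symm)

private lemma altsum_zero (s e : ℕ) (he : e < 2 * s) :
    ∑ k ∈ range (2 * s + 1), (-1:ℝ)^k * ((2*s).choose k : ℝ) * ((k:ℝ) - (s:ℝ))^e = 0 := by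
  have h := fwdDiff_iter_eq_sum_shift (1:ℕ) (fun m : ℕ ↦ ((m:ℝ) + (-(s:ℝ)))^e) (2*s) 0
  rw [fwd_pow_zero _ e (2*s) he] at h
  simp only [Pi.zero_apply, smul_eq_mul, mul_one, zero_add, zsmul_eq_mul] at h
  push_cast at h
  rw [eq_comm] at h
  rw [← h]
  refine Finset.sum_congr rfl fun k hk => ?_
  have hk' : k ≤ 2 * s := by have := mem_range.mp hk; omega
  have hpar : (-1:ℝ)^(2*s - k) = (-1:ℝ)^k := by
    have h2 : (2*s - k) + k = 2*s := by omega
    have h3 : (-1:ℝ)^(2*s-k) * (-1:ℝ)^k = 1 := by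
      rw [← pow_add, h2]; exact Even.neg_one_pow (even_two_mul s)
    have hk2 : (-1:ℝ)^k * (-1:ℝ)^k = 1 := by
      rw [← pow_add]; exact Even.neg_one_pow ⟨k, rfl⟩
    exact mul_right_cancel₀ (pow_ne_zero k (by norm_num)) (h3.trans hk2.symm)
  rw [hpar]
  ring

private lemma alt_choose_sum (s e : ℕ) (he : Even e) (he2 : e < 2 * s) :
    ∑ v ∈ Icc 1 s, (-1:ℝ)^(v+1) * ((2*s).choose (s+v) : ℝ) * (v:ℝ)^e
      = ((2*s).choose s : ℝ) * (0:ℝ)^e / 2 := by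
  set t : ℕ → ℝ := fun v => (-1:ℝ)^(v+1) * ((2*s).choose (s+v) : ℝ) * (v:ℝ)^e with ht
  set g : ℕ → ℝ := fun k => (-1:ℝ)^k * ((2*s).choose k : ℝ) * ((k:ℝ) - (s:ℝ))^e with hg
  have h0 : ∑ k ∈ range (2*s+1), g k = 0 := altsum_zero s e he2
  have hsplit : ∑ k ∈ range (2*s+1), g k
      = (∑ k ∈ range s, (g (s-1-k) + g (s+1+k))) + g s := by
    have h21 : 2*s+1 = (s+1) + s := by omega
    rw [h21, Finset.sum_range_add, Finset.sum_range_succ,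
      ← Finset.sum_range_reflect (f := g) s, Finset.sum_add_distrib]
    ring
  have hpair : ∀ k ∈ range s, g (s-1-k) + g (s+1+k) = -2 * (-1:ℝ)^s * t (k+1) := by
    intro k hk
    have hks : k < s := mem_range.mp hk
    have h2 : (s-1-k : ℕ) = s - (k+1) := by omega
    have hC : ((2*s).choose (s-1-k)) = ((2*s).choose (s+1+k)) := by
      have h1 : s-1-k = 2*s - (s+1+k) := by omega
      rw [h1, Nat.choose_symm (by omega)]
    have hcast : ((s-1-k : ℕ) : ℝ) - (s:ℝ) = -((k:ℝ)+1) := by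
      rw [h2, Nat.cast_sub (by omega)]; push_cast; ring
    have hpow1 : (-1:ℝ)^(s-1-k) = (-1:ℝ)^(s+1+k) := by
      refine neg_one_pow_eq _ _ ?_
      have : (s-1-k) + (s+1+k) = 2*s := by omega
      rw [this]; exact even_two_mul s
    simp only [hg, ht]
    rw [hC, hcast, hpow1, he.neg_pow]
    have hidx : s + 1 + k = s + (k+1) := by omega
    rw [hidx]
    have hpow2 : (-1:ℝ)^(s+(k+1)) = (-1:ℝ)^s * (-1:ℝ)^(k+1) := pow_add _ _ _
    have hpow3 : (-1:ℝ)^(k+1+1) = -(-1:ℝ)^(k+1) := by rw [pow_succ]; ring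
    push_cast
    rw [hpow2, hpow3]
    ring
  rw [hsplit, Finset.sum_congr rfl hpair] at h0
  have hgs : g s = (-1:ℝ)^s * ((2*s).choose s : ℝ) * (0:ℝ)^e := by
    simp only [hg]; rw [sub_self]
  rw [hgs] at h0
  rw [← Finset.mul_sum] at h0
  have hT : ∑ v ∈ Icc 1 s, t v = ∑ k ∈ range s, t (1+k) := by
    rw [← Finset.Ico_add_one_right_eq_Icc, Finset.sum_Ico_eq_sum_range]
    simp
  rw [hT]
  have hsame : ∑ k ∈ range s, t (1+k) = ∑ k ∈ range s, t (k+1) :=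
    Finset.sum_congr rfl fun k _ => by rw [add_comm]
  rw [hsame]
  have hs2 : (-1:ℝ)^(s*2) = 1 := Even.neg_one_pow ⟨s, by ring⟩
  linear_combination (-(1:ℝ)/2 * (-1:ℝ)^s) * h0 + (((2*s).choose s : ℝ) * (0:ℝ)^e / 2 - ∑ k ∈ range s, t (k+1)) * hs2

private lemma alpha_pow (s : ℕ) (hs : 1 ≤ s) (α : ℕ → ℝ)
    (hα : ∀ v : ℕ, α v = (-1 : ℝ) ^ (v + 1) * (Nat.factorial s : ℝ) ^ 2 /
      ((v : ℝ) * (Nat.factorial (s + v) : ℝ) * (Nat.factorial (s - v) : ℝ)))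
    (m : ℕ) (hm : Odd m) (hm2 : m ≤ 2 * s - 1) :
    ∑ v ∈ Icc 1 s, α v * (v:ℝ)^m = (0:ℝ)^(m-1) / 2 := by
  have hm1 : 1 ≤ m := hm.pos
  have hne3 : (((2*s).factorial : ℕ) : ℝ) ≠ 0 := Nat.cast_ne_zero.mpr (Nat.factorial_ne_zero _)
  have hstep : ∀ v ∈ Icc 1 s, α v * (v:ℝ)^m
      = ((s.factorial : ℝ)^2 / ((2*s).factorial : ℝ)) *
        ((-1:ℝ)^(v+1) * ((2*s).choose (s+v) : ℝ) * (v:ℝ)^(m-1)) := by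
    intro v hv
    obtain ⟨hv1, hv2⟩ := Finset.mem_Icc.mp hv
    have hne1 : ((s+v).factorial : ℝ) ≠ 0 := Nat.cast_ne_zero.mpr (Nat.factorial_ne_zero _)
    have hne2 : ((s-v).factorial : ℝ) ≠ 0 := Nat.cast_ne_zero.mpr (Nat.factorial_ne_zero _)
    have hv0 : (v:ℝ) ≠ 0 := Nat.cast_ne_zero.mpr (by omega)
    have hfac : (((2*s).choose (s+v) : ℝ)) * ((s+v).factorial : ℝ) * ((s-v).factorial : ℝ)
        = ((2*s).factorial : ℝ) := by
      have h := Nat.choose_mul_factorial_mul_factorial (n := 2*s) (k := s+v) (by omega)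
      have h2 : 2*s - (s+v) = s - v := by omega
      rw [h2] at h
      exact_mod_cast congrArg (Nat.cast (R := ℝ)) h
    have hvm : (v:ℝ)^m = (v:ℝ)^(m-1) * v := by
      rw [← pow_succ]; congr 1; omega
    rw [hα v, hvm]
    field_simp
    linear_combination (-1:ℝ) * hfac
  rw [Finset.sum_congr rfl hstep, ← Finset.mul_sum,
    alt_choose_sum s (m-1) (Nat.Odd.sub_odd hm odd_one) (by omega)]
  have hcc : (((2*s).choose s : ℝ)) * (s.factorial:ℝ) * (s.factorial:ℝ)
      = ((2*s).factorial : ℝ) := by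
    have h := Nat.choose_mul_factorial_mul_factorial (n := 2*s) (k := s) (by omega)
    have h2 : 2*s - s = s := by omega
    rw [h2] at h
    exact_mod_cast congrArg (Nat.cast (R := ℝ)) h
  by_cases hm' : m = 1
  · subst hm'
    simp only [Nat.sub_self, pow_zero]
    field_simp
    linear_combination hcc
  · rw [zero_pow (by omega : m - 1 ≠ 0)]
    simp

private lemma sum_reflect_pow (j : ℕ) (hj : 1 ≤ j) (v : ℕ) :
    ∑ w ∈ range v, ((v:ℝ) - (w:ℝ))^j = (∑ w ∈ range v, (w:ℝ)^j) + (v:ℝ)^j := by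
  have h1 : ∑ w ∈ range v, ((v:ℝ) - (w:ℝ))^j
      = ∑ w ∈ range v, (((w:ℝ) + 1))^j := by
    rw [← Finset.sum_range_reflect (fun w => ((v:ℝ) - (w:ℝ))^j) v]
    refine Finset.sum_congr rfl fun w hw => ?_
    have hwv : w < v := mem_range.mp hw
    have : ((v - 1 - w : ℕ) : ℝ) = (v:ℝ) - 1 - (w:ℝ) := by
      have h2 : (v - 1 - w : ℕ) = v - (1 + w) := by omega
      rw [h2, Nat.cast_sub (by omega)]; push_cast; ring
    rw [this]; ring_nf
  rw [h1]
  have h2 := Finset.sum_range_succ' (fun w => (w:ℝ)^j) v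
  rw [Finset.sum_range_succ] at h2
  push_cast at h2 ⊢
  rw [zero_pow (by omega : j ≠ 0)] at h2
  linarith [h2]

private lemma faulhaber_real (v j : ℕ) :
    ∑ w ∈ range v, (w:ℝ)^j = ∑ i ∈ range (j+1),
      ((bernoulli i : ℚ) : ℝ) * ((j+1).choose i : ℝ) * (v:ℝ)^(j+1-i) / ((j:ℝ)+1) := by
  have h := congrArg (Rat.cast (K := ℝ)) (sum_range_pow v j)
  push_cast at h
  convert h using 2 <;> norm_num

private lemma bernoulli_odd_zero' {n : ℕ} (h : Odd n) (h1 : 1 < n) : bernoulli n = 0 := by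
  rw [bernoulli_eq_bernoulli'_of_ne_one (by omega), bernoulli'_eq_zero_of_odd h h1]

private lemma S_eq_bernoulli (s : ℕ) (hs : 1 ≤ s) (α : ℕ → ℝ)
    (hα : ∀ v : ℕ, α v = (-1 : ℝ) ^ (v + 1) * (Nat.factorial s : ℝ) ^ 2 /
      ((v : ℝ) * (Nat.factorial (s + v) : ℝ) * (Nat.factorial (s - v) : ℝ)))
    (j : ℕ) (hj1 : 1 ≤ j) (hj2 : j ≤ 2 * s - 1) :
    ∑ v ∈ Icc 1 s, α v * ∑ w ∈ range v, ((w:ℝ)^j + ((w:ℝ) - (v:ℝ))^j)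
      = ((bernoulli j : ℚ) : ℝ) := by
  rcases Nat.even_or_odd j with hje | hjo
  · -- even case
    have hj2' : 2 ≤ j := by
      rcases hje with ⟨c, hc⟩; omega
    -- inner sum identity
    have hinner : ∀ v : ℕ, ∑ w ∈ range v, ((w:ℝ)^j + ((w:ℝ) - (v:ℝ))^j)
        = 2 * (∑ i ∈ range (j+1),
            ((bernoulli i : ℚ) : ℝ) * ((j+1).choose i : ℝ) * (v:ℝ)^(j+1-i) / ((j:ℝ)+1))
          + (v:ℝ)^j := by
      intro v
      have hev : ∀ w : ℕ, ((w:ℝ) - (v:ℝ))^j = ((v:ℝ) - (w:ℝ))^j := by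
        intro w
        rw [show ((w:ℝ) - v) = -((v:ℝ) - w) by ring, hje.neg_pow]
      calc ∑ w ∈ range v, ((w:ℝ)^j + ((w:ℝ) - (v:ℝ))^j)
          = (∑ w ∈ range v, (w:ℝ)^j) + ∑ w ∈ range v, ((v:ℝ) - (w:ℝ))^j := by
            rw [← Finset.sum_add_distrib]
            exact Finset.sum_congr rfl fun w _ => by rw [hev w]
        _ = 2 * (∑ w ∈ range v, (w:ℝ)^j) + (v:ℝ)^j := by
            rw [sum_reflect_pow j hj1 v]; ring
        _ = _ := by rw [faulhaber_real v j]
    set B : ℕ → ℝ := fun i => ((bernoulli i : ℚ) : ℝ) * ((j+1).choose i : ℝ) / ((j:ℝ)+1)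
      with hB
    set A : ℕ → ℝ := fun m => ∑ v ∈ Icc 1 s, α v * (v:ℝ)^m with hA
    have step1 : ∀ v : ℕ, α v * ∑ w ∈ range v, ((w:ℝ)^j + ((w:ℝ) - (v:ℝ))^j)
        = (∑ i ∈ range (j+1), 2 * B i * (α v * (v:ℝ)^(j+1-i))) + α v * (v:ℝ)^j := by
      intro v
      rw [hinner v, mul_add, Finset.mul_sum, Finset.mul_sum]
      congr 1
      refine Finset.sum_congr rfl fun i _ => ?_
      simp only [hB]
      ring
    calc ∑ v ∈ Icc 1 s, α v * ∑ w ∈ range v, ((w:ℝ)^j + ((w:ℝ) - (v:ℝ))^j)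
        = (∑ v ∈ Icc 1 s, ∑ i ∈ range (j+1), 2 * B i * (α v * (v:ℝ)^(j+1-i))) + A j := by
          rw [← Finset.sum_add_distrib]
          exact Finset.sum_congr rfl fun v _ => step1 v
      _ = (∑ i ∈ range (j+1), 2 * B i * A (j+1-i)) + A j := by
          rw [Finset.sum_comm (s := Icc 1 s) (t := range (j+1))
            (f := fun v i => 2 * B i * (α v * (v:ℝ)^(j+1-i)))]
          congr 1
          refine Finset.sum_congr rfl fun i _ => ?_
          simp only [hA]
          rw [Finset.mul_sum]
      _ = (∑ i ∈ range (j+1),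
            ((if i = 1 then -A j else 0) + (if i = j then ((bernoulli j : ℚ) : ℝ) else 0))) + A j := by
          congr 1
          refine Finset.sum_congr rfl fun i hi => ?_
          have hij : i ≤ j := by have := mem_range.mp hi; omega
          by_cases h1 : i = 1
          · subst h1
            have hj1' : (1:ℕ) ≠ j := by omega
            rw [if_pos rfl, if_neg hj1', add_zero]
            have hjj1 : j + 1 - 1 = j := by omega
            rw [hjj1]
            simp only [hB, bernoulli_one, Nat.choose_one_right]
            push_cast
            have hjne : ((j:ℝ)+1) ≠ 0 := by positivity
            field_simp
          · by_cases hjj : i = j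
            · rw [if_neg h1, if_pos hjj, hjj, zero_add]
              have hA1 : A 1 = 1/2 := by
                have h' := alpha_pow s hs α hα 1 odd_one (by omega)
                norm_num at h'
                rw [hA]; simpa using h'
              simp only [hB]
              rw [show j + 1 - j = 1 by omega, hA1, Nat.choose_succ_self_right]
              have : ((j:ℝ)+1) ≠ 0 := by positivity
              field_simp
              norm_num
            · rw [if_neg h1, if_neg hjj]
              rcases Nat.even_or_odd i with hie | hio
              · -- i even, exponent odd ≥ 3
                have hm : Odd (j+1-i) := by
                  rcases hje with ⟨a, ha⟩; rcases hie with ⟨b, hb⟩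
                  refine ⟨a - b, by omega⟩
                have hm2 : j+1-i ≤ 2*s - 1 := by
                  rcases hje with ⟨a, ha⟩; omega
                have : A (j+1-i) = 0 := by
                  have h' := alpha_pow s hs α hα _ hm hm2
                  rw [zero_pow (by omega : j+1-i-1 ≠ 0)] at h'
                  norm_num at h'
                  rw [hA]; simpa using h'
                rw [this]; ring
              · -- i odd > 1 : bernoulli i = 0
                have : bernoulli i = 0 := bernoulli_odd_zero' hio (by rcases hio with ⟨c, hc⟩; omega)
                simp only [hB, this]
                norm_num
      _ = ((bernoulli j : ℚ) : ℝ) := by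
          rw [Finset.sum_add_distrib, Finset.sum_ite_eq' (range (j+1)) 1 (fun _ => -A j),
            Finset.sum_ite_eq' (range (j+1)) j (fun _ => ((bernoulli j : ℚ) : ℝ))]
          rw [if_pos (mem_range.mpr (by omega)), if_pos (mem_range.mpr (by omega))]
          ring
  · -- odd case
    have hinner : ∀ v : ℕ, ∑ w ∈ range v, ((w:ℝ)^j + ((w:ℝ) - (v:ℝ))^j)
        = -(v:ℝ)^j := by
      intro v
      have hod : ∀ w : ℕ, ((w:ℝ) - (v:ℝ))^j = -((v:ℝ) - (w:ℝ))^j := by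
        intro w
        rw [show ((w:ℝ) - v) = -((v:ℝ) - w) by ring, hjo.neg_pow]
      calc ∑ w ∈ range v, ((w:ℝ)^j + ((w:ℝ) - (v:ℝ))^j)
          = (∑ w ∈ range v, (w:ℝ)^j) - ∑ w ∈ range v, ((v:ℝ) - (w:ℝ))^j := by
            rw [sub_eq_add_neg, ← Finset.sum_neg_distrib, ← Finset.sum_add_distrib]
            exact Finset.sum_congr rfl fun w _ => by rw [hod w]
        _ = -(v:ℝ)^j := by rw [sum_reflect_pow j hj1 v]; ring
    have h1 : ∑ v ∈ Icc 1 s, α v * ∑ w ∈ range v, ((w:ℝ)^j + ((w:ℝ) - (v:ℝ))^j)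
        = -∑ v ∈ Icc 1 s, α v * (v:ℝ)^j := by
      rw [← Finset.sum_neg_distrib]
      exact Finset.sum_congr rfl fun v _ => by rw [hinner v]; ring
    rw [h1, alpha_pow s hs α hα j hjo hj2]
    by_cases hj1' : j = 1
    · subst hj1'; norm_num
    · rw [zero_pow (by omega : j - 1 ≠ 0), bernoulli_odd_zero' hjo (by omega)]
      norm_num

/-- if the symmetric boundary block `H_L` of an SBP weight matrix
satisfies the compatibility conditions (with `i = 0`)
`j ∑_v ∑_w h_{vw} (−1)^{j−1} (r−w)^{j−1} = −(−r)^j + ∑_{v=1}^s α_v ∑_{w=0}^{v−1} (w^j + (w−v)^j)`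
for `j = 1, …, 2s−1`, then its row sums `σ_v = ∑_w h_{vw}` satisfy the quadrature
accuracy conditions `j ∑_v σ_v (r−v)^{j−1} = r^j − (−1)^j β_j` for `j = 1, …, 2s−1`. -/
theorem sbp_full_norm_row_sums (s r : ℕ) (hs : 1 ≤ s) (hr : 1 ≤ r) (α : ℕ → ℝ)
    (hα : ∀ v : ℕ, α v = (-1 : ℝ) ^ (v + 1) * (Nat.factorial s : ℝ) ^ 2 /
      ((v : ℝ) * (Nat.factorial (s + v) : ℝ) * (Nat.factorial (s - v) : ℝ)))
    (H : Matrix (Fin r) (Fin r) ℝ) (hsym : H.IsSymm)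
    (hcompat : ∀ j : ℕ, 1 ≤ j → j ≤ 2 * s - 1 →
      (j : ℝ) * ∑ v : Fin r, ∑ w : Fin r,
          H v w * (-1 : ℝ) ^ (j - 1) * ((r - (w : ℕ) : ℕ) : ℝ) ^ (j - 1) =
        -(-(r : ℝ)) ^ j + ∑ v ∈ Finset.Icc 1 s, α v *
          ∑ w ∈ Finset.range v, ((w : ℝ) ^ j + ((w : ℝ) - (v : ℝ)) ^ j)) :
    ∀ j : ℕ, 1 ≤ j → j ≤ 2 * s - 1 →
      (j : ℝ) * ∑ v : Fin r, (∑ w : Fin r, H v w) * ((r - (v : ℕ) : ℕ) : ℝ) ^ (j - 1) =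
        (r : ℝ) ^ j - (-1 : ℝ) ^ j * (bernoulli j : ℝ) := by
  intro j hj1 hj2
  have key := hcompat j hj1 hj2
  rw [S_eq_bernoulli s hs α hα j hj1 hj2] at key
  have hswap : (∑ v : Fin r, ∑ w : Fin r,
        H v w * (-1:ℝ)^(j-1) * ((r - (w:ℕ) : ℕ):ℝ)^(j-1))
      = (-1:ℝ)^(j-1) * ∑ v : Fin r, (∑ w : Fin r, H v w) * ((r - (v:ℕ) : ℕ):ℝ)^(j-1) := by
    rw [Finset.sum_comm, Finset.mul_sum]
    refine Finset.sum_congr rfl fun w _ => ?_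
    rw [Finset.sum_mul, Finset.mul_sum]
    refine Finset.sum_congr rfl fun v _ => ?_
    rw [hsym.apply w v]
    ring
  rw [hswap] at key
  obtain ⟨k, rfl⟩ : ∃ k, j = k + 1 := ⟨j - 1, by omega⟩
  simp only [Nat.add_sub_cancel] at key ⊢
  rw [neg_pow (r:ℝ) (k+1)] at key
  have hs2 : (-1:ℝ)^(k*2) = 1 := Even.neg_one_pow ⟨k, by ring⟩
  push_cast at key ⊢
  linear_combination (-1:ℝ)^k * key +
    ((r:ℝ)^(k+1) - ((k:ℝ)+1) * (∑ v : Fin r, (∑ w : Fin r, H v w) * ((r - (v:ℕ) : ℕ):ℝ)^k)) * hs2
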